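/- Let r ≥ 1, let A = (a_{i,j}) be an r×r generalised Cartan matrix, and let F be a linearly ordered field. For every tuple (s_1,…,s_r) of positive elements of F there exists a unique map k : {1,…,r} × ℤ → F such that k(i,m) > 0 for all (i,m), k satisfies the Y-frieze relation k(i,m)·k(i,m+1) = (∏_{j=i+1}^{r} (1+k(j,m))^{-a_{j,i}})·(∏_{j=1}^{i-1} (1+k(j,m+1))^{-a_{j,i}}) for all (i,m), and k(i,0) = s_i for all i ∈ {1,…,r}. -/

import Mathlib

/-- An r×r generalised Cartan matrix. -/
def IsGCM {r : ℕ} (A : Matrix (Fin r) (Fin r) ℤ) : Prop :=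
  (∀ i, A i i = 2) ∧ ∀ i j, i ≠ j → A i j ≤ 0 ∧ (A i j = 0 ↔ A j i = 0)
open Finset

section YF
variable {r : ℕ} {F : Type*} [Field F] [LinearOrder F] [IsStrictOrderedRing F] (A : Matrix (Fin r) (Fin r) ℤ)

noncomputable def nxtCol (c : Fin r → F) : Fin r → F
  | i =>
    ((∏ j ∈ Finset.univ.filter (fun j => i < j), (1 + c j) ^ (-(A j i)).toNat) *
     (∏ j ∈ (Finset.univ.filter (fun j => j < i)).attach,
        (1 + nxtCol c j.1) ^ (-(A j.1 i)).toNat)) / c i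
termination_by i => i.val
decreasing_by exact (Finset.mem_filter.mp j.2).2

noncomputable def prvCol (c : Fin r → F) : Fin r → F
  | i =>
    ((∏ j ∈ (Finset.univ.filter (fun j => i < j)).attach,
        (1 + prvCol c j.1) ^ (-(A j.1 i)).toNat) *
     (∏ j ∈ Finset.univ.filter (fun j => j < i), (1 + c j) ^ (-(A j i)).toNat)) / c i
termination_by i => r - i.val
decreasing_by
  have h1 : i < j.1 := (Finset.mem_filter.mp j.2).2
  have h2 := j.1.isLt
  simp only [Fin.lt_def] at h1
  omega

theorem nxtCol_pos {c : Fin r → F} (hc : ∀ i, 0 < c i) : ∀ i, 0 < nxtCol A c i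
  | i => by
    rw [nxtCol]
    refine div_pos (mul_pos (Finset.prod_pos ?_) (Finset.prod_pos ?_)) (hc i)
    · exact fun j _ => pow_pos (by linarith [hc j]) _
    · exact fun j _ => pow_pos (by linarith [nxtCol_pos hc j.1]) _
termination_by i => i.val
decreasing_by exact (Finset.mem_filter.mp j.2).2

theorem prvCol_pos {c : Fin r → F} (hc : ∀ i, 0 < c i) : ∀ i, 0 < prvCol A c i
  | i => by
    rw [prvCol]
    refine div_pos (mul_pos (Finset.prod_pos ?_) (Finset.prod_pos ?_)) (hc i)
    · exact fun j _ => pow_pos (by linarith [prvCol_pos hc j.1]) _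
    · exact fun j _ => pow_pos (by linarith [hc j]) _
termination_by i => r - i.val
decreasing_by
  have h1 : i < j.1 := (Finset.mem_filter.mp j.2).2
  have h2 := j.1.isLt
  simp only [Fin.lt_def] at h1
  omega

theorem nxtCol_spec {c : Fin r → F} (hc : ∀ i, 0 < c i) (i : Fin r) :
    c i * nxtCol A c i =
      (∏ j ∈ Finset.univ.filter (fun j => i < j), (1 + c j) ^ (-(A j i)).toNat) *
      (∏ j ∈ Finset.univ.filter (fun j => j < i), (1 + nxtCol A c j) ^ (-(A j i)).toNat) := by
  rw [nxtCol, Finset.prod_attach (f := fun j => (1 + nxtCol A c j) ^ (-(A j i)).toNat),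
    mul_div_cancel₀]
  exact (hc i).ne'

theorem prvCol_spec {c : Fin r → F} (hc : ∀ i, 0 < c i) (i : Fin r) :
    prvCol A c i * c i =
      (∏ j ∈ Finset.univ.filter (fun j => i < j), (1 + prvCol A c j) ^ (-(A j i)).toNat) *
      (∏ j ∈ Finset.univ.filter (fun j => j < i), (1 + c j) ^ (-(A j i)).toNat) := by
  rw [prvCol, Finset.prod_attach (f := fun j => (1 + prvCol A c j) ^ (-(A j i)).toNat),
    div_mul_cancel₀]
  exact (hc i).ne'

theorem nxtCol_unique {c d : Fin r → F} (hc : ∀ i, 0 < c i)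
    (h : ∀ i, c i * d i =
      (∏ j ∈ Finset.univ.filter (fun j => i < j), (1 + c j) ^ (-(A j i)).toNat) *
      (∏ j ∈ Finset.univ.filter (fun j => j < i), (1 + d j) ^ (-(A j i)).toNat)) :
    ∀ i, d i = nxtCol A c i
  | i => by
    have hrec : ∀ j : {x // x ∈ Finset.univ.filter (fun j => j < i)},
        d j.1 = nxtCol A c j.1 := fun j => nxtCol_unique hc h j.1
    rw [nxtCol]
    have heq : ∏ j ∈ (Finset.univ.filter (fun j => j < i)).attach,
        (1 + nxtCol A c j.1) ^ (-(A j.1 i)).toNat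
        = ∏ j ∈ Finset.univ.filter (fun j => j < i), (1 + d j) ^ (-(A j i)).toNat := by
      rw [← Finset.prod_attach (f := fun j => (1 + d j) ^ (-(A j i)).toNat)]
      exact Finset.prod_congr rfl fun j _ => by rw [hrec j]
    rw [heq, eq_div_iff (hc i).ne', mul_comm]
    exact h i
termination_by i => i.val
decreasing_by exact (Finset.mem_filter.mp j.2).2

theorem prvCol_unique {c d : Fin r → F} (hc : ∀ i, 0 < c i)
    (h : ∀ i, d i * c i =
      (∏ j ∈ Finset.univ.filter (fun j => i < j), (1 + d j) ^ (-(A j i)).toNat) *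
      (∏ j ∈ Finset.univ.filter (fun j => j < i), (1 + c j) ^ (-(A j i)).toNat)) :
    ∀ i, d i = prvCol A c i
  | i => by
    have hrec : ∀ j : {x // x ∈ Finset.univ.filter (fun j => i < j)},
        d j.1 = prvCol A c j.1 := fun j => prvCol_unique hc h j.1
    rw [prvCol]
    have heq : ∏ j ∈ (Finset.univ.filter (fun j => i < j)).attach,
        (1 + prvCol A c j.1) ^ (-(A j.1 i)).toNat
        = ∏ j ∈ Finset.univ.filter (fun j => i < j), (1 + d j) ^ (-(A j i)).toNat := by
      rw [← Finset.prod_attach (f := fun j => (1 + d j) ^ (-(A j i)).toNat)]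
      exact Finset.prod_congr rfl fun j _ => by rw [hrec j]
    rw [heq, eq_div_iff (hc i).ne']
    exact h i
termination_by i => r - i.val
decreasing_by
  have h1 : i < j.1 := (Finset.mem_filter.mp j.2).2
  have h2 := j.1.isLt
  simp only [Fin.lt_def] at h1
  omega


noncomputable def Kcol (s : Fin r → F) : ℤ → Fin r → F
  | Int.ofNat n => (nxtCol A)^[n] s
  | Int.negSucc n => (prvCol A)^[n + 1] s

theorem Kcol_pos {s : Fin r → F} (hs : ∀ i, 0 < s i) :
    ∀ m i, 0 < Kcol A s m i := by
  have h1 : ∀ n : ℕ, ∀ i, 0 < (nxtCol A)^[n] s i := by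
    intro n
    induction n with
    | zero => exact hs
    | succ n ih => rw [Function.iterate_succ_apply']; exact nxtCol_pos A ih
  have h2 : ∀ n : ℕ, ∀ i, 0 < (prvCol A)^[n] s i := by
    intro n
    induction n with
    | zero => exact hs
    | succ n ih => rw [Function.iterate_succ_apply']; exact prvCol_pos A ih
  intro m
  cases m with
  | ofNat n => exact h1 n
  | negSucc n => exact h2 (n + 1)

theorem Kcol_succ_nonneg (s : Fin r → F) (n : ℕ) :
    Kcol A s (Int.ofNat n + 1) = nxtCol A (Kcol A s (Int.ofNat n)) := by
  show Kcol A s (Int.ofNat (n + 1)) = _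
  simp only [Kcol, Function.iterate_succ_apply']

theorem Kcol_negSucc (s : Fin r → F) (n : ℕ) :
    Kcol A s (Int.negSucc n) = prvCol A (Kcol A s (Int.negSucc n + 1)) := by
  cases n with
  | zero =>
    show Kcol A s (Int.negSucc 0) = prvCol A (Kcol A s (Int.ofNat 0))
    simp only [Kcol, Function.iterate_one, Function.iterate_zero, id]
    rfl
  | succ n =>
    show Kcol A s (Int.negSucc (n + 1)) = prvCol A (Kcol A s (Int.negSucc n))
    simp only [Kcol, Function.iterate_succ_apply']

end YF

/-- For a linearly ordered field `F`, positive `F`-valued Y-frieze patterns associated to a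
generalised Cartan matrix `A` are in bijection with `r`-tuples of positive elements of `F`. -/
theorem Yfrieze_exists_unique {r : ℕ} (hr : 1 ≤ r) {F : Type*} [Field F] [LinearOrder F] [IsStrictOrderedRing F]
    (A : Matrix (Fin r) (Fin r) ℤ) (hA : IsGCM A)
    (s : Fin r → F) (hs : ∀ i, 0 < s i) :
    ∃! k : Fin r → ℤ → F,
      (∀ i m, 0 < k i m) ∧
      (∀ i m, k i m * k i (m + 1) =
        (∏ j ∈ Finset.univ.filter (fun j => i < j), (1 + k j m) ^ (-(A j i)).toNat) *
        (∏ j ∈ Finset.univ.filter (fun j => j < i), (1 + k j (m + 1)) ^ (-(A j i)).toNat)) ∧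
      (∀ i, k i 0 = s i) := by
  refine ⟨fun i m => Kcol A s m i, ⟨fun i m => Kcol_pos A hs m i, fun i m => ?_, fun i => rfl⟩,
    fun k hk => ?_⟩
  · show Kcol A s m i * Kcol A s (m + 1) i =
      (∏ j ∈ Finset.univ.filter (fun j => i < j), (1 + Kcol A s m j) ^ (-(A j i)).toNat) *
      (∏ j ∈ Finset.univ.filter (fun j => j < i), (1 + Kcol A s (m + 1) j) ^ (-(A j i)).toNat)
    cases m with
    | ofNat n =>
      rw [Kcol_succ_nonneg A s n]
      exact nxtCol_spec A (Kcol_pos A hs (Int.ofNat n)) i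
    | negSucc n =>
      rw [Kcol_negSucc A s n]
      exact prvCol_spec A (Kcol_pos A hs (Int.negSucc n + 1)) i
  · obtain ⟨hkpos, hkrel, hk0⟩ := hk
    have hfwd : ∀ n : ℕ, (fun i => k i (Int.ofNat n)) = Kcol A s (Int.ofNat n) := by
      intro n
      induction n with
      | zero =>
        have h0 : Kcol A s (Int.ofNat 0) = s := rfl
        rw [h0]; funext i; exact hk0 i
      | succ n ih =>
        rw [show (Int.ofNat (n + 1)) = Int.ofNat n + 1 from rfl, Kcol_succ_nonneg, ← ih]
        funext i
        exact nxtCol_unique A (fun j => hkpos j _) (fun j => hkrel j (Int.ofNat n)) i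
    have hstep : ∀ n : ℕ,
        (fun i => k i (Int.negSucc n + 1)) = Kcol A s (Int.negSucc n + 1) →
        (fun i => k i (Int.negSucc n)) = Kcol A s (Int.negSucc n) := by
      intro n h1
      rw [Kcol_negSucc, ← h1]
      funext i
      exact prvCol_unique A (fun j => hkpos j _) (fun j => hkrel j (Int.negSucc n)) i
    have hbwd : ∀ n : ℕ, (fun i => k i (Int.negSucc n)) = Kcol A s (Int.negSucc n) := by
      intro n
      induction n with
      | zero => exact hstep 0 (hfwd 0)
      | succ n ih => exact hstep (n + 1) ih
    funext i m
    show k i m = Kcol A s m i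
    cases m with
    | ofNat n => exact congrFun (hfwd n) i
    | negSucc n => exact congrFun (hbwd n) i
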